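/- If 𝐓 is an ℵ₁-tree with at most ℵ₁-many cofinal branches (|B(𝐓)| ≤ ℵ₁), then ◇(𝐓) holds. -/

import Mathlib

noncomputable section

open Cardinal Set

/-- The first uncountable ordinal `ω₁`. -/
def omega1 : Ordinal := (Cardinal.aleph 1).ord

/-- A transfinite binary sequence: a function `t : α → 2` for some ordinal `α`. -/
abbrev BinSeq : Type 1 := Σ α : Ordinal, (Set.Iio α → Bool)

namespace BinSeq

/-- The restriction `t ↾ β` of a binary sequence `t` to an initial segment of its domain. -/
def restrict (t : BinSeq) (β : Ordinal) (h : β ≤ t.1) : BinSeq :=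
  ⟨β, fun x => t.2 ⟨x.1, lt_of_lt_of_le x.2 h⟩⟩

/-- `s.sub t`: `s` is an initial segment of `t` (that is, `s ⊆ t`). -/
def sub (s t : BinSeq) : Prop := ∃ h : s.1 ≤ t.1, t.restrict s.1 h = s

/-- `s.ssub t`: `s` is a proper initial segment of `t` (that is, `s ⊊ t`). -/
def ssub (s t : BinSeq) : Prop := ∃ h : s.1 < t.1, t.restrict s.1 h.le = s

end BinSeq

/-- A candidate branch: a function `f : ω₁ → 2`. -/
abbrev BinBranch : Type 1 := Set.Iio omega1 → Bool

/-- The restriction `f ↾ α` of `f : ω₁ → 2` to an ordinal `α < ω₁`. -/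
def BinBranch.restrict (f : BinBranch) (α : Ordinal) (h : α < omega1) : BinSeq :=
  ⟨α, fun x => f ⟨x.1, lt_trans x.2 h⟩⟩

/-- `C` is a closed unbounded (club) subset of `ω₁`: it is a set of countable ordinals,
unbounded in `ω₁`, and closed under suprema of bounded nonempty subsets. -/
def IsClubBelow (C : Set Ordinal) : Prop :=
  C ⊆ Set.Iio omega1 ∧
  (∀ β < omega1, ∃ α ∈ C, β < α) ∧
  (∀ s : Set Ordinal, s ⊆ C → s.Nonempty → sSup s < omega1 → sSup s ∈ C)

/-- `S` is a stationary subset of `ω₁`: it meets every club subset of `ω₁`. -/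
def IsStationaryBelow (S : Set Ordinal) : Prop :=
  ∀ C : Set Ordinal, IsClubBelow C → (S ∩ C).Nonempty

/-- `T` is a binary ℵ₁-tree: a downward closed family of binary sequences of
countable length, all of whose levels are countable. -/
structure IsBinaryAleph1Tree (T : Set BinSeq) : Prop where
  dom_lt : ∀ t ∈ T, t.1 < omega1
  downward_closed : ∀ t ∈ T, ∀ β, ∀ h : β ≤ t.1, t.restrict β h ∈ T
  countable_levels : ∀ α < omega1, {t | t ∈ T ∧ t.1 = α}.Countable

/-- The set of cofinal branches of a binary tree:
functions `f : ω₁ → 2` all of whose initial segments lie in `T`. -/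
def BinBranches (T : Set BinSeq) : Set BinBranch :=
  {f | ∀ α, ∀ h : α < omega1, f.restrict α h ∈ T}

/-- A binary Kurepa tree: a binary ℵ₁-tree with at least ℵ₂-many cofinal branches. -/
def IsBinaryKurepa (T : Set BinSeq) : Prop :=
  IsBinaryAleph1Tree T ∧ Cardinal.aleph 2 ≤ #(↥(BinBranches T))

/-- `◇(T)` for a binary tree `T`: there is a transversal `⟨t_α | α < ω₁⟩` with `t_α ∈ T_α`
such that for every cofinal branch `f` of `T`, the set `{α < ω₁ | f ↾ α = t_α}` is stationary. -/
def BinDiamond (T : Set BinSeq) : Prop :=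
  ∃ t : Ordinal → BinSeq,
    (∀ α < omega1, t α ∈ T ∧ (t α).1 = α) ∧
    ∀ f ∈ BinBranches T,
      IsStationaryBelow {α | ∃ h : α < omega1, BinBranch.restrict f α h = t α}

/-- An abstract tree: a strict partial order in which the set of predecessors
of every point is well-ordered. -/
structure OTree where
  carrier : Type
  lt : carrier → carrier → Prop
  lt_trans : ∀ {x y z}, lt x y → lt y z → lt x z
  lt_irrefl : ∀ x, ¬ lt x x
  pred_wellOrder : ∀ x, IsWellOrder {y // lt y x} fun a b => lt a.1 b.1

namespace OTree

/-- The height of a node: the order type of its set of predecessors. -/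
def height (t : OTree) (x : t.carrier) : Ordinal :=
  @Ordinal.type {y // t.lt y x} (fun a b => t.lt a.1 b.1) (t.pred_wellOrder x)

/-- The `α`-th level of the tree. -/
def level (t : OTree) (α : Ordinal) : Set t.carrier := {x | t.height x = α}

/-- An ℵ₁-tree: a tree of height `ω₁` all of whose levels are countable. -/
def IsAleph1Tree (t : OTree) : Prop :=
  (∀ x, t.height x < omega1) ∧
  (∀ α < omega1, (t.level α).Nonempty) ∧
  (∀ α < omega1, (t.level α).Countable)

/-- A tree is Hausdorff if nodes of the same limit height
with the same predecessors are equal. -/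
def Hausdorff (t : OTree) : Prop :=
  ∀ x y : t.carrier, Order.IsSuccLimit (t.height x) → t.height x = t.height y →
    {z | t.lt z x} = {z | t.lt z y} → x = y

/-- The set of cofinal branches: uncountable maximal chains. -/
def branches (t : OTree) : Set (Set t.carrier) :=
  {C | IsMaxChain t.lt C ∧ ¬ C.Countable}

/-- A Kurepa tree: an ℵ₁-tree with at least ℵ₂-many cofinal branches. -/
def IsKurepa (t : OTree) : Prop :=
  t.IsAleph1Tree ∧ Cardinal.aleph 2 ≤ #(↥t.branches)

/-- `◇(𝐓)`: there is a transversal `⟨b_α | α < ω₁⟩` with `b_α ∈ T_α` such that for every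
cofinal branch `f`, the set `{α < ω₁ | f ↾ α = b_α}` (i.e. the set of `α < ω₁` such that
`b_α` is the unique element of `f` on the `α`-th level) is stationary. -/
def Diamond (t : OTree) : Prop :=
  ∃ b : Ordinal → t.carrier,
    (∀ α < omega1, b α ∈ t.level α) ∧
    ∀ f ∈ t.branches,
      IsStationaryBelow {α | α < omega1 ∧ f ∩ t.level α = {b α}}

/-- A tree has height `ω₁` if every node has countable height
and every countable level is nonempty. -/
def HasHeightOmega1 (t : OTree) : Prop :=
  (∀ x, t.height x < omega1) ∧ ∀ α < omega1, (t.level α).Nonempty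

end OTree


section Aux6

open Ordinal in
private lemma aux6_cof_eq : omega1.{0}.cof = Cardinal.aleph 1 :=
  Cardinal.isRegular_aleph_one.cof_eq

private lemma aux6_om_pos : 0 < omega1.{0} :=
  (Cardinal.isSuccLimit_ord (Cardinal.aleph0_le_aleph 1)).pos

private lemma aux6_om_limit : Order.IsSuccLimit omega1.{0} :=
  Cardinal.isSuccLimit_ord (Cardinal.aleph0_le_aleph 1)

private lemma aux6_iSup_lt {g : ℕ → Ordinal.{0}} (h : ∀ n, g n < omega1) :
    (⨆ n, g n) < omega1 := by
  refine Ordinal.iSup_lt_ord ?_ h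
  rw [aux6_cof_eq]; simpa using Cardinal.aleph0_lt_aleph_one

private lemma aux6_cnt_Iio {o : Ordinal.{0}} (h : o < omega1) : (Set.Iio o).Countable := by
  rw [Cardinal.countable_iff_lt_aleph_one, Ordinal.mk_Iio_ordinal]
  have : o.card < aleph 1 := Cardinal.lt_ord.mp h
  calc Cardinal.lift.{1} o.card < Cardinal.lift.{1} (aleph 1) := Cardinal.lift_lt.mpr this
    _ = aleph 1 := by simp

private lemma aux6_club_iInter {C : ℕ → Set Ordinal.{0}} (hC : ∀ n, IsClubBelow (C n)) :
    IsClubBelow (⋂ n, C n) := by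
  have hsub : (⋂ n, C n) ⊆ Set.Iio omega1 := (Set.iInter_subset C 0).trans (hC 0).1
  refine ⟨hsub, ?_, ?_⟩
  · intro β hβ
    have hu : ∀ n : ℕ, ∀ β : Ordinal, β < omega1 → ∃ α ∈ C n, β < α := fun n => (hC n).2.1
    choose u hu1 hu2 using hu
    set u' : ℕ → Ordinal → Ordinal := fun n β => if h : β < omega1 then u n β h else 0 with hu'
    have hu'1 : ∀ n β, β < omega1 → u' n β ∈ C n := by
      intro n β h; simp only [hu', dif_pos h]; exact hu1 n β h
    have hu'2 : ∀ n β, β < omega1 → β < u' n β := by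
      intro n β h; simp only [hu', dif_pos h]; exact hu2 n β h
    have hu'lt : ∀ n β, β < omega1 → u' n β < omega1 := fun n β h => (hC n).1 (hu'1 n β h)
    set v : Ordinal → Ordinal := fun β => ⨆ n, u' n β with hv
    have hvlt : ∀ β, β < omega1 → v β < omega1 := fun β h => aux6_iSup_lt (fun n => hu'lt n β h)
    have hvgt : ∀ β, β < omega1 → β < v β := fun β h =>
      lt_of_lt_of_le (hu'2 0 β h) (Ordinal.le_iSup _ 0)
    set γ : ℕ → Ordinal := fun k => Nat.rec β (fun _ ih => v ih) k with hγ
    have hγs : ∀ k, γ (k+1) = v (γ k) := fun k => rfl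
    have hγlt : ∀ k, γ k < omega1 := by
      intro k; induction k with
      | zero => exact hβ
      | succ k ih => rw [hγs]; exact hvlt _ ih
    set lam : Ordinal := ⨆ k, γ k with hlam
    have hlamlt : lam < omega1 := aux6_iSup_lt hγlt
    have key : ∀ n, lam ∈ C n := by
      intro n
      have hs1 : Set.range (fun k => u' n (γ k)) ⊆ C n := by
        rintro x ⟨k, rfl⟩; exact hu'1 n _ (hγlt k)
      have heq : sSup (Set.range (fun k => u' n (γ k))) = lam := by
        show (⨆ k, u' n (γ k)) = lam
        apply le_antisymm
        · refine Ordinal.iSup_le (fun k => ?_)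
          have h1 : u' n (γ k) ≤ v (γ k) := Ordinal.le_iSup _ n
          exact h1.trans ((hγs k ▸ Ordinal.le_iSup γ (k+1)))
        · refine Ordinal.iSup_le (fun k => ?_)
          exact ((hu'2 n _ (hγlt k)).le).trans (Ordinal.le_iSup _ k)
      have := (hC n).2.2 _ hs1 ⟨_, Set.mem_range_self 0⟩ (by rw [heq]; exact hlamlt)
      rwa [heq] at this
    refine ⟨lam, Set.mem_iInter.mpr key, ?_⟩
    calc β < v β := hvgt β hβ
      _ = γ 1 := rfl
      _ ≤ lam := Ordinal.le_iSup γ 1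
  · intro s hs hne hlt
    exact Set.mem_iInter.mpr (fun n => (hC n).2.2 s (hs.trans (Set.iInter_subset C n)) hne hlt)

private lemma aux6_stationary_of_iUnion {S : Set Ordinal.{0}} {T : ℕ → Set Ordinal.{0}}
    (hS : IsStationaryBelow S) (hsub : S ⊆ ⋃ n, T n) : ∃ n, IsStationaryBelow (T n) := by
  by_contra h
  push_neg at h
  have : ∀ n, ∃ C, IsClubBelow C ∧ T n ∩ C = ∅ := by
    intro n
    obtain ⟨C, hC, hTC⟩ : ∃ C, IsClubBelow C ∧ ¬(T n ∩ C).Nonempty := by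
      by_contra h2; push_neg at h2; exact (h n) (fun C hC => h2 C hC)
    exact ⟨C, hC, Set.not_nonempty_iff_eq_empty.mp hTC⟩
  choose Cl hCl hTCl using this
  obtain ⟨α, hαS, hαC⟩ := hS _ (aux6_club_iInter hCl)
  obtain ⟨n, hn⟩ := Set.mem_iUnion.mp (hsub hαS)
  have : α ∈ T n ∩ Cl n := ⟨hn, Set.mem_iInter.mp hαC n⟩
  rw [hTCl n] at this; exact this

private lemma aux6_stat_mono {S S' : Set Ordinal.{0}} (h : S ⊆ S')
    (hS : IsStationaryBelow S) : IsStationaryBelow S' := by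
  intro C hC
  obtain ⟨α, hα, hαC⟩ := hS C hC
  exact ⟨α, h hα, hαC⟩

/-- Ulam-type construction: a family of pairwise disjoint stationary subsets of `ω₁`
indexed by any type of cardinality at most `ℵ₁`. -/
private lemma aux6_disjoint_stationary (ι : Type) (hι : #ι ≤ Cardinal.aleph 1) :
    ∃ S : ι → Set Ordinal.{0}, (∀ i, IsStationaryBelow (S i)) ∧
      (∀ i, S i ⊆ Set.Iio omega1) ∧
      (∀ i i' α, α ∈ S i → α ∈ S i' → i = i') := by
  -- injections from initial segments into ℕ
  have he : ∀ β : Ordinal.{0}, β < omega1 → ∃ g : (Set.Iio β) → ℕ, Function.Injective g := by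
    intro β h
    haveI : Countable (Set.Iio β) := Set.countable_coe_iff.mpr (aux6_cnt_Iio h)
    exact exists_injective_nat _
  choose e he using he
  set A : ℕ → Ordinal.{0} → Set Ordinal.{0} := fun n ξ =>
    {β | ∃ hb : β < omega1, ∃ hξ : ξ ∈ Set.Iio β, e β hb ⟨ξ, hξ⟩ = n} with hA
  -- each column has a stationary member
  have hcol : ∀ ξ : Ordinal.{0}, ξ < omega1 → ∃ n, IsStationaryBelow (A n ξ) := by
    intro ξ hξ
    have hstat : IsStationaryBelow (Set.Ioi ξ ∩ Set.Iio omega1) := by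
      intro C hC
      obtain ⟨α, hαC, hξα⟩ := hC.2.1 ξ hξ
      exact ⟨α, ⟨hξα, hC.1 hαC⟩, hαC⟩
    refine aux6_stationary_of_iUnion hstat ?_
    rintro β ⟨hξβ, hβ⟩
    exact Set.mem_iUnion.mpr ⟨e β hβ ⟨ξ, hξβ⟩, hβ, hξβ, rfl⟩
  -- choose, for each ξ, a stationary column entry
  set N : Ordinal.{0} → ℕ := fun ξ => if h : ξ < omega1 then (hcol ξ h).choose else 0 with hN
  have hNstat : ∀ ξ : Ordinal.{0}, ξ < omega1 → IsStationaryBelow (A (N ξ) ξ) := by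
    intro ξ h; simp only [hN, dif_pos h]; exact (hcol ξ h).choose_spec
  -- some fiber of N is uncountable
  have hIio_unc : ¬ (Set.Iio omega1.{0}).Countable := by
    rw [Cardinal.countable_iff_lt_aleph_one, Ordinal.mk_Iio_ordinal]
    have h0 : omega1.{0}.card = aleph 1 := Cardinal.card_ord _
    rw [h0]; simp
  have hfib : ∃ m, ¬ ({ξ ∈ Set.Iio omega1.{0} | N ξ = m}).Countable := by
    by_contra h
    push_neg at h
    apply hIio_unc
    have : Set.Iio omega1.{0} ⊆ ⋃ m, {ξ ∈ Set.Iio omega1.{0} | N ξ = m} := by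
      intro ξ hξ; exact Set.mem_iUnion.mpr ⟨N ξ, hξ, rfl⟩
    exact Set.Countable.mono this (Set.countable_iUnion h)
  obtain ⟨m, hm⟩ := hfib
  set Y : Set Ordinal.{0} := {ξ ∈ Set.Iio omega1.{0} | N ξ = m} with hY
  have hYcard : Cardinal.aleph 1 ≤ #Y := by
    by_contra h
    exact hm ((Cardinal.countable_iff_lt_aleph_one Y).mpr (not_le.mp h))
  -- embed ι into Y
  have hemb : Nonempty (ι ↪ ↥Y) := by
    rw [← Cardinal.lift_mk_le']
    calc Cardinal.lift.{1} #ι ≤ Cardinal.lift.{1} (Cardinal.aleph 1) := Cardinal.lift_le.mpr hι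
      _ = Cardinal.aleph 1 := by simp
      _ ≤ #Y := hYcard
      _ = Cardinal.lift.{0} #Y := (Cardinal.lift_uzero _).symm
  obtain ⟨j⟩ := hemb
  refine ⟨fun i => A m (j i).1, fun i => ?_, fun i => ?_, fun i i' α hα hα' => ?_⟩
  · have hmem := (j i).2
    have h1 : (j i).1 < omega1 := hmem.1
    have h2 : N (j i).1 = m := hmem.2
    have := hNstat _ h1
    rwa [h2] at this
  · rintro β ⟨hb, -, -⟩
    exact hb
  · obtain ⟨hb, hξ, heq⟩ := hα
    obtain ⟨hb', hξ', heq'⟩ := hα'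
    have : (⟨(j i).1, hξ⟩ : Set.Iio α) = ⟨(j i').1, hξ'⟩ := by
      apply he α hb
      rw [heq, heq']
    exact j.injective (Subtype.ext (Subtype.mk_eq_mk.mp this))

-- tree lemmas
private lemma aux6_height_eq_typein {t : OTree} {y : t.carrier} (a : {z // t.lt z y}) :
    haveI := t.pred_wellOrder y
    t.height a.1 = Ordinal.typein (fun (a b : {z // t.lt z y}) => t.lt a.1 b.1) a := by
  haveI := t.pred_wellOrder y
  rw [← Ordinal.type_subrel]
  haveI := t.pred_wellOrder a.1
  refine RelIso.ordinal_type_eq ?_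
  exact ⟨⟨fun w => ⟨⟨w.1, t.lt_trans w.2 a.2⟩, w.2⟩, fun b => ⟨b.1.1, b.2⟩, fun w => rfl,
    fun b => rfl⟩, Iff.rfl⟩

private lemma aux6_height_lt {t : OTree} {x y : t.carrier} (h : t.lt x y) :
    t.height x < t.height y := by
  haveI := t.pred_wellOrder y
  have := aux6_height_eq_typein (t := t) ⟨x, h⟩
  rw [this]
  exact Ordinal.typein_lt_type _ _

private lemma aux6_exists_below {t : OTree} {y : t.carrier} {α : Ordinal}
    (h : α < t.height y) : ∃ z, t.lt z y ∧ t.height z = α := by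
  haveI := t.pred_wellOrder y
  obtain ⟨a, ha⟩ := Ordinal.typein_surj (fun (a b : {z // t.lt z y}) => t.lt a.1 b.1) h
  exact ⟨a.1, a.2, by rw [aux6_height_eq_typein a, ha]⟩

private lemma aux6_tricho {t : OTree} {y z w : t.carrier} (hz : t.lt z y) (hw : t.lt w y) :
    t.lt z w ∨ z = w ∨ t.lt w z := by
  haveI := t.pred_wellOrder y
  rcases (@trichotomous_of _ (fun (a b : {v // t.lt v y}) => t.lt a.1 b.1) _
    ⟨z, hz⟩ ⟨w, hw⟩) with h | h | h
  · exact Or.inl h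
  · exact Or.inr (Or.inl (congrArg Subtype.val h))
  · exact Or.inr (Or.inr h)

private lemma aux6_downclosed {t : OTree} {f : Set t.carrier} (hf : IsMaxChain t.lt f)
    {x z : t.carrier} (hx : x ∈ f) (h : t.lt z x) : z ∈ f := by
  by_cases hzf : z ∈ f
  · exact hzf
  have hcomp : ∀ a ∈ f, a ≠ z → t.lt a z ∨ t.lt z a := by
    intro a ha haz
    rcases eq_or_ne a x with rfl | hax
    · exact Or.inr h
    rcases hf.1 ha hx hax with hlt | hlt
    · rcases aux6_tricho hlt h with h1 | h1 | h1
      · exact Or.inl h1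
      · exact absurd h1 haz
      · exact Or.inr h1
    · exact Or.inr (t.lt_trans h hlt)
  have hchain : IsChain t.lt (f ∪ {z}) := by
    intro a ha b hb hab
    rcases ha with ha | ha <;> rcases hb with hb | hb
    · exact hf.1 ha hb hab
    · rcases hb with rfl; exact hcomp a ha hab
    · rcases ha with rfl
      rcases hcomp b hb (Ne.symm hab) with h1 | h1
      · exact Or.inr h1
      · exact Or.inl h1
    · rcases ha with rfl; rcases hb with rfl; exact absurd rfl hab
  have := hf.2 hchain (Set.subset_union_left)
  rw [this]
  exact Or.inr rfl

private lemma aux6_level_eq {t : OTree} {f : Set t.carrier} (hf : IsMaxChain t.lt f)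
    {x y : t.carrier} (hx : x ∈ f) (hy : y ∈ f) (h : t.height x = t.height y) : x = y := by
  rcases eq_or_ne x y with rfl | hne
  · rfl
  rcases hf.1 hx hy hne with hlt | hlt
  · exact absurd h (ne_of_lt (aux6_height_lt hlt))
  · exact absurd h.symm (ne_of_lt (aux6_height_lt hlt))

private lemma aux6_unbounded {t : OTree} (h1 : t.IsAleph1Tree) {f : Set t.carrier}
    (hf : f ∈ t.branches) : ∀ β < omega1, ∃ x ∈ f, β < t.height x := by
  intro β hβ
  by_contra hcon
  push_neg at hcon
  have hfsub : f ⊆ ⋃ γ ∈ Set.Iic β, t.level γ := by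
    intro x hx
    exact Set.mem_biUnion (hcon x hx) rfl
  have hIic : (Set.Iic β).Countable := by
    refine Set.Countable.mono ?_ (aux6_cnt_Iio (aux6_om_limit.succ_lt hβ))
    exact Set.Iic_subset_Iio.mpr (Order.lt_succ β)
  have hcnt : (⋃ γ ∈ Set.Iic β, t.level γ).Countable :=
    Set.Countable.biUnion hIic (fun γ hγ => h1.2.2 γ (lt_of_le_of_lt hγ hβ))
  exact hf.2 (hcnt.mono hfsub)

private lemma aux6_branch_level {t : OTree} (h1 : t.IsAleph1Tree) {f : Set t.carrier}
    (hf : f ∈ t.branches) {α : Ordinal} (hα : α < omega1) :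
    ∃ x, x ∈ f ∧ f ∩ t.level α = {x} := by
  obtain ⟨y, hy, hαy⟩ := aux6_unbounded h1 hf α hα
  obtain ⟨z, hzy, hz⟩ := aux6_exists_below hαy
  have hzf : z ∈ f := aux6_downclosed hf.1 hy hzy
  refine ⟨z, hzf, ?_⟩
  ext w
  constructor
  · rintro ⟨hwf, hwl⟩
    have : t.height w = t.height z := by rw [hwl, hz]
    exact aux6_level_eq hf.1 hwf hzf this
  · rintro rfl
    exact ⟨hzf, hz⟩

end Aux6

/-- If `𝐓` is an ℵ₁-tree with at most ℵ₁-many cofinal branches,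
then `◇(𝐓)` holds. -/
theorem statement6 (t : OTree) (h1 : t.IsAleph1Tree)
    (h2 : #(↥t.branches) ≤ Cardinal.aleph 1) : t.Diamond := by
  classical
  obtain ⟨S, hSstat, hSsub, hSuniq⟩ := aux6_disjoint_stationary (↥t.branches) h2
  have hblx : ∀ (f : ↥t.branches) (α : Ordinal.{0}), α < omega1 →
      ∃ x, x ∈ f.1 ∧ f.1 ∩ t.level α = {x} := fun f α hα => aux6_branch_level h1 f.2 hα
  choose bl hbl1 hbl2 using hblx
  have hdef : ∀ α : Ordinal.{0}, α < omega1 → ∃ x, x ∈ t.level α := fun α hα => h1.2.1 α hα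
  choose d hd using hdef
  set b : Ordinal → t.carrier := fun α =>
    if h : (∃ f : ↥t.branches, α ∈ S f) ∧ α < omega1 then bl h.1.choose α h.2
    else if h' : α < omega1 then d α h' else d 0 aux6_om_pos with hb
  refine ⟨b, ?_, ?_⟩
  · intro α hα
    by_cases h : (∃ f : ↥t.branches, α ∈ S f) ∧ α < omega1
    · simp only [hb, dif_pos h]
      have hmem : bl h.1.choose α h.2 ∈ h.1.choose.1 ∩ t.level α := by
        rw [hbl2 h.1.choose α h.2]; rfl
      exact hmem.2
    · simp only [hb, dif_neg h, dif_pos hα]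
      exact hd α hα
  · intro f hf
    set fs : ↥t.branches := ⟨f, hf⟩ with hfs
    refine aux6_stat_mono ?_ (hSstat fs)
    intro α hα
    have hαlt : α < omega1 := hSsub fs hα
    have hcond : (∃ g : ↥t.branches, α ∈ S g) ∧ α < omega1 := ⟨⟨fs, hα⟩, hαlt⟩
    refine ⟨hαlt, ?_⟩
    have hbeq : b α = bl hcond.1.choose α hcond.2 := by
      simp only [hb, dif_pos hcond]
    rw [hbeq]
    have hgf : hcond.1.choose = fs := hSuniq _ _ α hcond.1.choose_spec hα
    rw [hgf]
    exact hbl2 fs α hcond.2
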